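/- arXiv:0711.3784 — 2 statements merged into one kernel-verified Lean document; each statement's English description precedes it below -/
import Mathlib

section
/- Let a(0), a(1), …, a(2^{n+1}−1) be complex numbers with a(0) = 0. Then max_{1 ≤ p < 2^{n+1}} |a(p)|² ≤ (n+1) ∑_{k=0}^{n} ∑_{j=0}^{2^{n−k}−1} |a(2^k + j·2^{k+1}) − a(j·2^{k+1})|². -/
/-- The Rademacher–Menchoff combinatorial lemma: for complex numbers
`a 0, …, a (2^(n+1) - 1)` with `a 0 = 0`,
`max_{1 ≤ p < 2^(n+1)} |a p|² ≤ (n+1) ∑_{k=0}^{n} ∑_{j=0}^{2^(n-k)-1}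
  |a (2^k + j·2^(k+1)) - a (j·2^(k+1))|²`. -/
theorem stmt_2 (n : ℕ) (a : ℕ → ℂ) (ha : a 0 = 0) :
    ∀ p, 1 ≤ p → p < 2 ^ (n + 1) →
      ‖a p‖ ^ 2 ≤ (n + 1 : ℝ) *
        ∑ k ∈ Finset.range (n + 1), ∑ j ∈ Finset.range (2 ^ (n - k)),
          ‖a (2 ^ k + j * 2 ^ (k + 1)) - a (j * 2 ^ (k + 1))‖ ^ 2 := by
  intro p _ hp
  set t : ℕ → ℕ := fun k => p / 2 ^ k * 2 ^ k with ht
  have ht0 : t 0 = p := by simp [ht]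
  have htn : t (n + 1) = 0 := by
    simp [ht, Nat.div_eq_of_lt hp]
  have hstep : ∀ k, t k = t (k + 1) + (p / 2 ^ k % 2) * 2 ^ k := by
    intro k
    have h1 : p / 2 ^ (k + 1) = p / 2 ^ k / 2 := by
      rw [pow_succ, Nat.div_div_eq_div_mul]
    have h2 : p / 2 ^ k = 2 * (p / 2 ^ k / 2) + p / 2 ^ k % 2 := by omega
    simp only [ht, h1]
    calc p / 2 ^ k * 2 ^ k = (2 * (p / 2 ^ k / 2) + p / 2 ^ k % 2) * 2 ^ k := by rw [← h2]
      _ = p / 2 ^ k / 2 * 2 ^ (k + 1) + p / 2 ^ k % 2 * 2 ^ k := by ring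
  -- telescoping
  have htel : a p = ∑ k ∈ Finset.range (n + 1), (a (t k) - a (t (k + 1))) := by
    rw [Finset.sum_range_sub' (fun k => a (t k))]
    rw [ht0, htn, ha, sub_zero]
  -- each term bound
  have hterm : ∀ k ∈ Finset.range (n + 1),
      ‖a (t k) - a (t (k + 1))‖ ^ 2 ≤
        ∑ j ∈ Finset.range (2 ^ (n - k)),
          ‖a (2 ^ k + j * 2 ^ (k + 1)) - a (j * 2 ^ (k + 1))‖ ^ 2 := by
    intro k hk
    rw [Finset.mem_range] at hk
    have hkn : k ≤ n := by omega
    rcases Nat.mod_two_eq_zero_or_one (p / 2 ^ k) with h | h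
    · have : t k = t (k + 1) := by rw [hstep k, h]; ring
      rw [this, sub_self, norm_zero]
      simpa using Finset.sum_nonneg fun i _ => sq_nonneg
        ‖a (2 ^ k + i * 2 ^ (k + 1)) - a (i * 2 ^ (k + 1))‖
    · set j := p / 2 ^ (k + 1) with hj
      have hjlt : j < 2 ^ (n - k) := by
        rw [hj, Nat.div_lt_iff_lt_mul (pow_pos two_pos _)]
        calc p < 2 ^ (n + 1) := hp
          _ = 2 ^ (n - k) * 2 ^ (k + 1) := by
              rw [← pow_add]; congr 1; omega
      have h1 : t (k + 1) = j * 2 ^ (k + 1) := by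
        simp only [ht, hj, Nat.mul_comm]
      have h2 : t k = 2 ^ k + j * 2 ^ (k + 1) := by
        rw [hstep k, h, h1]; ring
      rw [h1, h2]
      exact Finset.single_le_sum (f := fun j =>
        ‖a (2 ^ k + j * 2 ^ (k + 1)) - a (j * 2 ^ (k + 1))‖ ^ 2)
        (fun i _ => by positivity) (Finset.mem_range.mpr hjlt)
  calc ‖a p‖ ^ 2 ≤ (∑ k ∈ Finset.range (n + 1), ‖a (t k) - a (t (k + 1))‖) ^ 2 := by
        apply pow_le_pow_left₀ (norm_nonneg _)
        rw [htel]; exact norm_sum_le _ _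
    _ ≤ (Finset.range (n + 1)).card *
          ∑ k ∈ Finset.range (n + 1), ‖a (t k) - a (t (k + 1))‖ ^ 2 :=
        sq_sum_le_card_mul_sum_sq
    _ ≤ (n + 1 : ℝ) * ∑ k ∈ Finset.range (n + 1),
          ∑ j ∈ Finset.range (2 ^ (n - k)),
            ‖a (2 ^ k + j * 2 ^ (k + 1)) - a (j * 2 ^ (k + 1))‖ ^ 2 := by
        rw [Finset.card_range]
        push_cast
        exact mul_le_mul_of_nonneg_left (Finset.sum_le_sum hterm) (by positivity)
end

section
/- Let X_1, X_2, … be pairwise uncorrelated complex-valued random variables with E[X_i] = 0 and variances σ_i² = E[|X_i|²], and let S_n = X_1 + ⋯ + X_n. Then for every m ≥ 0, E[max_{2^m < k ≤ 2^{m+1}} |S_k − S_{2^m}|²] ≤ (m² + 1) ∑_{i=1}^{2^m} σ_{2^m+i}². -/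
set_option maxHeartbeats 1000000

open MeasureTheory Finset

section helpers

lemma sum_blocks {M : Type*} [AddCommMonoid M] (f : ℕ → M) (c d : ℕ) :
    ∀ N : ℕ, ∑ t ∈ Finset.range N, ∑ i ∈ Finset.Ioc (c + t * d) (c + (t + 1) * d), f i
      = ∑ i ∈ Finset.Ioc c (c + N * d), f i
  | 0 => by simp
  | N + 1 => by
    rw [Finset.sum_range_succ, sum_blocks f c d N,
      Finset.sum_Ioc_consecutive f (Nat.le_add_right _ _)
        (by nlinarith [Nat.mul_le_mul_right d (Nat.le_succ N)])]

lemma sum_Ioc_shift {M : Type*} [AddCommMonoid M] (g : ℕ → M) (a b c : ℕ) :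
    ∑ i ∈ Finset.Ioc (c + a) (c + b), g i = ∑ i ∈ Finset.Ioc a b, g (c + i) := by
  rw [← Finset.map_add_left_Ioc, Finset.sum_map]
  rfl

lemma binary_decomp {M : Type*} [AddCommMonoid M] :
    ∀ n : ℕ, ∀ j : ℕ, j < 2 ^ n → ∀ g : ℕ → M,
    ∑ i ∈ Finset.Ioc 0 j, g i =
      ∑ l ∈ Finset.range n, if j.testBit l then
        ∑ i ∈ Finset.Ioc (2 ^ (l+1) * (j / 2 ^ (l+1))) (2 ^ (l+1) * (j / 2 ^ (l+1)) + 2 ^ l), g i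
      else 0
  | 0, j, hj, g => by
    interval_cases j
    simp
  | n + 1, j, hj, g => by
    rcases lt_or_ge j (2 ^ n) with h | h
    · rw [Finset.sum_range_succ, Nat.testBit_lt_two_pow h, if_neg (by simp), add_zero]
      exact binary_decomp n j h g
    · -- top bit set
      set j' := j - 2 ^ n with hj'
      have hjeq : j = 2 ^ n + j' := by omega
      have hj'lt : j' < 2 ^ n := by
        have : 2 ^ (n+1) = 2 ^ n + 2 ^ n := by ring
        omega
      have htop : j.testBit n = true := by
        rw [Nat.testBit_eq_decide_div_mod_eq]
        have hdiv : j / 2 ^ n = 1 :=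
          Nat.div_eq_of_lt_le (by simpa using h)
            (by rw [show (1 + 1) * 2 ^ n = 2 ^ (n + 1) by ring]; exact hj)
        simp [hdiv]
      -- bits below n agree with j'
      have hbit : ∀ l, l < n → j.testBit l = j'.testBit l := by
        intro l hl
        rw [Nat.testBit_eq_decide_div_mod_eq, Nat.testBit_eq_decide_div_mod_eq]
        have h2 : 2 ^ n = 2 ^ (n - l - 1) * 2 * 2 ^ l := by
          rw [mul_assoc, mul_comm 2, ← pow_succ, ← pow_add]
          congr 1
          omega
        have : j / 2 ^ l = j' / 2 ^ l + 2 ^ (n - l - 1) * 2 := by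
          rw [hjeq, h2, add_comm, Nat.add_mul_div_right _ _ (pow_pos two_pos l)]
        rw [this, Nat.add_mul_mod_self_right]
      have hdivshift : ∀ l, l < n → 2 ^ (l+1) * (j / 2 ^ (l+1)) = 2 ^ n + 2 ^ (l+1) * (j' / 2 ^ (l+1)) := by
        intro l hl
        have h2 : 2 ^ n = 2 ^ (n - l - 1) * 2 ^ (l + 1) := by
          rw [← pow_add]; congr 1; omega
        have : j / 2 ^ (l+1) = j' / 2 ^ (l+1) + 2 ^ (n - l - 1) := by
          rw [hjeq, h2, add_comm, Nat.add_mul_div_right _ _ (pow_pos two_pos (l+1))]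
        rw [this, h2]; ring
      have hIH := binary_decomp n j' hj'lt (fun i => g (2 ^ n + i))
      rw [Finset.sum_range_succ, if_pos htop]
      have hzero : 2 ^ (n+1) * (j / 2 ^ (n+1)) = 0 := by
        rw [Nat.div_eq_of_lt hj, mul_zero]
      rw [hzero, zero_add]
      have hsplit : ∑ i ∈ Finset.Ioc 0 j, g i
          = ∑ i ∈ Finset.Ioc 0 (2 ^ n), g i + ∑ i ∈ Finset.Ioc (2 ^ n) j, g i := by
        rw [Finset.sum_Ioc_consecutive g (Nat.zero_le _) (by omega)]
      rw [hsplit, add_comm]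
      congr 1
      have : ∑ i ∈ Finset.Ioc (2 ^ n) j, g i = ∑ i ∈ Finset.Ioc 0 j', g (2 ^ n + i) := by
        rw [hjeq, ← sum_Ioc_shift g 0 j' (2 ^ n), add_zero]
      rw [this, hIH]
      apply Finset.sum_congr rfl
      intro l hl
      rw [Finset.mem_range] at hl
      rw [hbit l hl]
      by_cases hb : j'.testBit l
      · rw [if_pos hb, if_pos hb, hdivshift l hl, ← sum_Ioc_shift g _ _ (2 ^ n)]
        congr 1
        ring
      · rw [if_neg hb, if_neg hb]

lemma integrable_conj_mul {Ω : Type*} [MeasurableSpace Ω] {P : Measure Ω} {f g : Ω → ℂ}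
    (hf : MemLp f 2 P) (hg : MemLp g 2 P) :
    Integrable (fun ω => (starRingEnd ℂ) (f ω) * g ω) P := by
  have h := MeasureTheory.L2.integrable_inner (𝕜 := ℂ) (hf.toLp f) (hg.toLp g)
  refine h.congr ?_
  filter_upwards [hf.coeFn_toLp, hg.coeFn_toLp] with ω h1 h2
  simp [RCLike.inner_apply, h1, h2, mul_comm]

lemma orth {Ω : Type*} [MeasurableSpace Ω] (P : Measure Ω) [IsProbabilityMeasure P]
    (X : ℕ → Ω → ℂ) (hL2 : ∀ i, MemLp (X i) 2 P)
    (huncorr : ∀ i j, i ≠ j → ∫ ω, (starRingEnd ℂ) (X i ω) * X j ω ∂P = 0)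
    (s : Finset ℕ) :
    ∫ ω, ‖∑ i ∈ s, X i ω‖ ^ 2 ∂P = ∑ i ∈ s, ∫ ω, ‖X i ω‖ ^ 2 ∂P := by
  have hWint : Integrable (fun ω => ∑ i ∈ s, ∑ j ∈ s, (starRingEnd ℂ) (X i ω) * X j ω) P :=
    integrable_finset_sum _ fun i _ => integrable_finset_sum _ fun j _ =>
      integrable_conj_mul (hL2 i) (hL2 j)
  have key : ∀ ω : Ω, (‖∑ i ∈ s, X i ω‖ : ℝ) ^ 2
      = RCLike.re (∑ i ∈ s, ∑ j ∈ s, (starRingEnd ℂ) (X i ω) * X j ω) := by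
    intro ω
    rw [← Finset.sum_mul_sum, ← map_sum]
    rw [RCLike.conj_mul]
    simp [← Complex.ofReal_pow]
  calc ∫ ω, ‖∑ i ∈ s, X i ω‖ ^ 2 ∂P
      = ∫ ω, RCLike.re (∑ i ∈ s, ∑ j ∈ s, (starRingEnd ℂ) (X i ω) * X j ω) ∂P := by
        simp_rw [key]
    _ = RCLike.re (∫ ω, ∑ i ∈ s, ∑ j ∈ s, (starRingEnd ℂ) (X i ω) * X j ω ∂P) :=
        integral_re hWint
    _ = RCLike.re (∑ i ∈ s, ∑ j ∈ s, ∫ ω, (starRingEnd ℂ) (X i ω) * X j ω ∂P) := by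
        rw [integral_finset_sum _ fun i _ => integrable_finset_sum _ fun j _ =>
          integrable_conj_mul (hL2 i) (hL2 j)]
        congr 1
        exact Finset.sum_congr rfl fun i _ => integral_finset_sum _ fun j _ =>
          integrable_conj_mul (hL2 i) (hL2 j)
    _ = RCLike.re (∑ i ∈ s, ∫ ω, (starRingEnd ℂ) (X i ω) * X i ω ∂P) := by
        congr 1
        exact Finset.sum_congr rfl fun i hi =>
          Finset.sum_eq_single_of_mem i hi fun j _ hji => huncorr i j (Ne.symm hji)
    _ = ∑ i ∈ s, ∫ ω, ‖X i ω‖ ^ 2 ∂P := by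
        rw [map_sum]
        refine Finset.sum_congr rfl fun i _ => ?_
        have : ∀ ω : Ω, (starRingEnd ℂ) (X i ω) * X i ω = ((‖X i ω‖ ^ 2 : ℝ) : ℂ) := by
          intro ω
          rw [RCLike.conj_mul]
          simp
        simp_rw [this]
        have h1 : Integrable (fun ω => ((‖X i ω‖ ^ 2 : ℝ) : ℂ)) P :=
          (integrable_conj_mul (hL2 i) (hL2 i)).congr (Filter.Eventually.of_forall this)
        rw [← integral_re h1]
        simp [← Complex.ofReal_pow]
lemma chain_bound (g : ℕ → ℂ) (m j : ℕ) (hj1 : 1 ≤ j) (hj2 : j ≤ 2 ^ m) :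
    ‖∑ i ∈ Finset.Ioc 0 j, g i‖ ^ 2 ≤
      (m : ℝ) * ∑ l ∈ Finset.range m, ∑ t ∈ Finset.range (2 ^ (m - l)),
          ‖∑ i ∈ Finset.Ioc (t * 2 ^ l) ((t + 1) * 2 ^ l), g i‖ ^ 2
        + ∑ t ∈ Finset.range (2 ^ (m - m)), ‖∑ i ∈ Finset.Ioc (t * 2 ^ m) ((t + 1) * 2 ^ m), g i‖ ^ 2 := by
  rcases eq_or_lt_of_le hj2 with heq | hlt
  · -- j = 2^m : single top-level block
    have h1 : ∑ t ∈ Finset.range (2 ^ (m - m)), ‖∑ i ∈ Finset.Ioc (t * 2 ^ m) ((t + 1) * 2 ^ m), g i‖ ^ 2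
        = ‖∑ i ∈ Finset.Ioc 0 j, g i‖ ^ 2 := by
      simp [Nat.sub_self, heq]
    rw [h1]
    have : (0:ℝ) ≤ (m : ℝ) * ∑ l ∈ Finset.range m, ∑ t ∈ Finset.range (2 ^ (m - l)),
        ‖∑ i ∈ Finset.Ioc (t * 2 ^ l) ((t + 1) * 2 ^ l), g i‖ ^ 2 :=
      mul_nonneg (Nat.cast_nonneg m) (Finset.sum_nonneg fun l _ =>
        Finset.sum_nonneg fun t _ => sq_nonneg _)
    linarith
  · -- j < 2^m : binary chain with at most m blocks
    rw [binary_decomp m j hlt g]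
    set c : ℕ → ℂ := fun l => if j.testBit l then
        ∑ i ∈ Finset.Ioc (2 ^ (l+1) * (j / 2 ^ (l+1))) (2 ^ (l+1) * (j / 2 ^ (l+1)) + 2 ^ l), g i
      else 0 with hc
    have step1 : ‖∑ l ∈ Finset.range m, c l‖ ^ 2 ≤ ((m : ℝ)) * ∑ l ∈ Finset.range m, ‖c l‖ ^ 2 := by
      calc ‖∑ l ∈ Finset.range m, c l‖ ^ 2 ≤ (∑ l ∈ Finset.range m, ‖c l‖) ^ 2 := by
            apply pow_le_pow_left₀ (norm_nonneg _) (norm_sum_le _ _)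
        _ ≤ (Finset.range m).card * ∑ l ∈ Finset.range m, ‖c l‖ ^ 2 :=
            sq_sum_le_card_mul_sum_sq
        _ = (m : ℝ) * ∑ l ∈ Finset.range m, ‖c l‖ ^ 2 := by rw [Finset.card_range]
    have step2 : ∀ l ∈ Finset.range m, ‖c l‖ ^ 2 ≤
        ∑ t ∈ Finset.range (2 ^ (m - l)), ‖∑ i ∈ Finset.Ioc (t * 2 ^ l) ((t + 1) * 2 ^ l), g i‖ ^ 2 := by
      intro l hl
      rw [Finset.mem_range] at hl
      by_cases hb : j.testBit l
      · rw [hc]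
        simp only [if_pos hb]
        set t := 2 * (j / 2 ^ (l + 1)) with ht
        have he1 : 2 ^ (l+1) * (j / 2 ^ (l+1)) = t * 2 ^ l := by rw [ht]; ring
        rw [he1, show t * 2 ^ l + 2 ^ l = (t + 1) * 2 ^ l from by ring]
        apply Finset.single_le_sum (f := fun t => ‖∑ i ∈ Finset.Ioc (t * 2 ^ l) ((t + 1) * 2 ^ l), g i‖ ^ 2)
          (fun t _ => sq_nonneg _)
        rw [Finset.mem_range]
        -- (t+1) * 2^l ≤ j < 2^m = 2^(m-l) * 2^l
        have hmod : 2 ^ l ≤ j % 2 ^ (l + 1) := by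
          apply Nat.ge_two_pow_of_testBit
          rw [Nat.testBit_mod_two_pow]
          simp [hb, Nat.lt_succ_self]
        have hdm : 2 ^ (l+1) * (j / 2 ^ (l+1)) + j % 2 ^ (l+1) = j := Nat.div_add_mod j (2 ^ (l+1))
        have hta : (t + 1) * 2 ^ l = t * 2 ^ l + 2 ^ l := by ring
        have hle : (t + 1) * 2 ^ l ≤ j := by omega
        have hpow : 2 ^ m = 2 ^ (m - l) * 2 ^ l := by rw [← pow_add]; congr 1; omega
        have : (t + 1) * 2 ^ l < 2 ^ (m - l) * 2 ^ l := by omega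
        have := Nat.lt_of_mul_lt_mul_right this
        omega
      · rw [hc]
        simp only [if_neg hb]
        have : (0:ℝ) ≤ ∑ t ∈ Finset.range (2 ^ (m - l)),
            ‖∑ i ∈ Finset.Ioc (t * 2 ^ l) ((t + 1) * 2 ^ l), g i‖ ^ 2 :=
          Finset.sum_nonneg fun t _ => sq_nonneg _
        simpa using this
    have step3 : ∑ l ∈ Finset.range m, ‖c l‖ ^ 2 ≤ ∑ l ∈ Finset.range m,
        ∑ t ∈ Finset.range (2 ^ (m - l)), ‖∑ i ∈ Finset.Ioc (t * 2 ^ l) ((t + 1) * 2 ^ l), g i‖ ^ 2 :=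
      Finset.sum_le_sum step2
    have hnn : (0:ℝ) ≤ ∑ t ∈ Finset.range (2 ^ (m - m)),
        ‖∑ i ∈ Finset.Ioc (t * 2 ^ m) ((t + 1) * 2 ^ m), g i‖ ^ 2 :=
      Finset.sum_nonneg fun t _ => sq_nonneg _
    have hm0 : (0:ℝ) ≤ (m:ℝ) := Nat.cast_nonneg m
    have := mul_le_mul_of_nonneg_left step3 hm0
    linarith

end helpers

/-- Rademacher–Menchoff maximal inequality: for pairwise uncorrelated centered
square-integrable complex random variables `X i` (`i ≥ 1`) with partial sums
`S n = ∑_{i=1}^n X i`,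
`E[max_{2^m < k ≤ 2^(m+1)} |S k - S (2^m)|²] ≤ (m²+1) ∑_{i=1}^{2^m} σ_{2^m+i}²`. -/
theorem stmt_4 {Ω : Type*} [MeasurableSpace Ω] (P : Measure Ω) [IsProbabilityMeasure P]
    (X : ℕ → Ω → ℂ) (hL2 : ∀ i, MemLp (X i) 2 P)
    (hmean : ∀ i, ∫ ω, X i ω ∂P = 0)
    (huncorr : ∀ i j, i ≠ j → ∫ ω, (starRingEnd ℂ) (X i ω) * X j ω ∂P = 0)
    (m : ℕ) :
    ∫ ω, (Finset.Ioc (2 ^ m) (2 ^ (m + 1))).sup'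
        (Finset.nonempty_Ioc.mpr (Nat.pow_lt_pow_succ one_lt_two))
        (fun k => ‖(∑ i ∈ Finset.Icc 1 k, X i ω) - ∑ i ∈ Finset.Icc 1 (2 ^ m), X i ω‖ ^ 2) ∂P
      ≤ ((m : ℝ) ^ 2 + 1) *
        ∑ i ∈ Finset.Icc 1 (2 ^ m), ∫ ω, ‖X (2 ^ m + i) ω‖ ^ 2 ∂P := by
  -- notation
  set T : ℕ → Ω → ℝ := fun l ω => ∑ t ∈ Finset.range (2 ^ (m - l)),
    ‖∑ i ∈ Finset.Ioc (2 ^ m + t * 2 ^ l) (2 ^ m + (t + 1) * 2 ^ l), X i ω‖ ^ 2 with hT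
  set F : Ω → ℝ := fun ω => (m : ℝ) * ∑ l ∈ Finset.range m, T l ω + T m ω with hF
  have hTint : ∀ l, Integrable (T l) P := by
    intro l
    apply integrable_finset_sum
    intro t _
    exact MemLp.integrable_sq
      (MemLp.norm (memLp_finset_sum _ (fun i _ => hL2 i)))
  have hFint : Integrable F P :=
    ((integrable_finset_sum _ fun l _ => hTint l).const_mul (m : ℝ)).add (hTint m)
  -- pointwise bound
  have hpt : ∀ ω, (Finset.Ioc (2 ^ m) (2 ^ (m + 1))).sup'
        (Finset.nonempty_Ioc.mpr (Nat.pow_lt_pow_succ one_lt_two))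
        (fun k => ‖(∑ i ∈ Finset.Icc 1 k, X i ω) - ∑ i ∈ Finset.Icc 1 (2 ^ m), X i ω‖ ^ 2)
      ≤ F ω := by
    intro ω
    apply Finset.sup'_le
    intro k hk
    rw [Finset.mem_Ioc] at hk
    -- rewrite the difference as a sum over Ioc (2^m) k
    have hdiff : (∑ i ∈ Finset.Icc 1 k, X i ω) - ∑ i ∈ Finset.Icc 1 (2 ^ m), X i ω
        = ∑ i ∈ Finset.Ioc (2 ^ m) k, X i ω := by
      have h1 : ∀ n : ℕ, ∑ i ∈ Finset.Icc 1 n, X i ω = ∑ i ∈ Finset.Ioc 0 n, X i ω := by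
        intro n; rw [← Finset.Icc_add_one_left_eq_Ioc]; rfl
      rw [h1, h1, ← Finset.sum_Ioc_consecutive (fun i => X i ω) (Nat.zero_le (2 ^ m)) hk.1.le]
      ring
    set j := k - 2 ^ m with hj
    have hkeq : k = 2 ^ m + j := by omega
    have hj1 : 1 ≤ j := by omega
    have hj2 : j ≤ 2 ^ m := by
      have : 2 ^ (m + 1) = 2 ^ m + 2 ^ m := by ring
      omega
    have hshift : ∑ i ∈ Finset.Ioc (2 ^ m) k, X i ω = ∑ i ∈ Finset.Ioc 0 j, X (2 ^ m + i) ω := by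
      rw [hkeq, ← sum_Ioc_shift (fun i => X i ω) 0 j (2 ^ m), add_zero]
    rw [hdiff, hshift]
    have := chain_bound (fun i => X (2 ^ m + i) ω) m j hj1 hj2
    -- convert blocks in local coordinates to global blocks
    have hblock : ∀ l t : ℕ, ∑ i ∈ Finset.Ioc (t * 2 ^ l) ((t + 1) * 2 ^ l), X (2 ^ m + i) ω
        = ∑ i ∈ Finset.Ioc (2 ^ m + t * 2 ^ l) (2 ^ m + (t + 1) * 2 ^ l), X i ω := by
      intro l t
      rw [sum_Ioc_shift (fun i => X i ω) (t * 2 ^ l) ((t + 1) * 2 ^ l) (2 ^ m)]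
    simp only [hblock] at this
    exact this
  -- nonnegativity of the sup'
  have hnn : ∀ ω, (0:ℝ) ≤ (Finset.Ioc (2 ^ m) (2 ^ (m + 1))).sup'
        (Finset.nonempty_Ioc.mpr (Nat.pow_lt_pow_succ one_lt_two))
        (fun k => ‖(∑ i ∈ Finset.Icc 1 k, X i ω) - ∑ i ∈ Finset.Icc 1 (2 ^ m), X i ω‖ ^ 2) := by
    intro ω
    have hmem : 2 ^ (m + 1) ∈ Finset.Ioc (2 ^ m) (2 ^ (m + 1)) := by
      rw [Finset.mem_Ioc]
      exact ⟨Nat.pow_lt_pow_succ one_lt_two, le_refl _⟩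
    exact le_trans (sq_nonneg _)
      (Finset.le_sup' (fun k => ‖(∑ i ∈ Finset.Icc 1 k, X i ω) - ∑ i ∈ Finset.Icc 1 (2 ^ m), X i ω‖ ^ 2) hmem)
  have hmono : ∫ ω, (Finset.Ioc (2 ^ m) (2 ^ (m + 1))).sup'
        (Finset.nonempty_Ioc.mpr (Nat.pow_lt_pow_succ one_lt_two))
        (fun k => ‖(∑ i ∈ Finset.Icc 1 k, X i ω) - ∑ i ∈ Finset.Icc 1 (2 ^ m), X i ω‖ ^ 2) ∂P
      ≤ ∫ ω, F ω ∂P :=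
    integral_mono_of_nonneg (Filter.Eventually.of_forall hnn) hFint
      (Filter.Eventually.of_forall hpt)
  refine le_trans hmono ?_
  -- compute ∫ F
  set σ : ℕ → ℝ := fun i => ∫ ω, ‖X i ω‖ ^ 2 ∂P with hσ
  set V : ℝ := ∑ i ∈ Finset.Ioc (2 ^ m) (2 ^ (m + 1)), σ i with hV
  have hTl : ∀ l, l ≤ m → ∫ ω, T l ω ∂P = V := by
    intro l hl
    simp only [hT]
    rw [integral_finset_sum _ (f := fun t ω => ‖∑ i ∈ Finset.Ioc (2 ^ m + t * 2 ^ l) (2 ^ m + (t + 1) * 2 ^ l), X i ω‖ ^ 2) (fun t _ => MemLp.integrable_sq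
      (MemLp.norm (memLp_finset_sum _ (fun i _ => hL2 i))))]
    have horth : ∀ t : ℕ, ∫ ω, ‖∑ i ∈ Finset.Ioc (2 ^ m + t * 2 ^ l) (2 ^ m + (t + 1) * 2 ^ l), X i ω‖ ^ 2 ∂P
        = ∑ i ∈ Finset.Ioc (2 ^ m + t * 2 ^ l) (2 ^ m + (t + 1) * 2 ^ l), σ i := by
      intro t
      exact orth P X hL2 huncorr _
    simp_rw [horth]
    rw [sum_blocks σ (2 ^ m) (2 ^ l) (2 ^ (m - l))]
    have hpow : 2 ^ (m - l) * 2 ^ l = 2 ^ m := by rw [← pow_add]; congr 1; omega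
    rw [hpow, hV]
    have h2 : 2 ^ m + 2 ^ m = 2 ^ (m + 1) := by ring
    rw [h2]
  have hFint2 : ∫ ω, F ω ∂P = (m:ℝ) * ((m:ℝ) * V) + V := by
    rw [hF]
    rw [integral_add ((integrable_finset_sum _ fun l _ => hTint l).const_mul (m : ℝ)) (hTint m)]
    rw [integral_const_mul, integral_finset_sum _ fun l _ => hTint l]
    have : ∀ l ∈ Finset.range m, ∫ ω, T l ω ∂P = V := fun l hl =>
      hTl l (Finset.mem_range.mp hl).le
    rw [Finset.sum_congr rfl this, Finset.sum_const, Finset.card_range, nsmul_eq_mul,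
      hTl m (le_refl m)]
  rw [hFint2]
  -- identify V with the RHS sum
  have hVeq : ∑ i ∈ Finset.Icc 1 (2 ^ m), (∫ ω, ‖X (2 ^ m + i) ω‖ ^ 2 ∂P) = V := by
    rw [hV]
    have h1 : Finset.Icc 1 (2 ^ m) = Finset.Ioc 0 (2 ^ m) := Finset.Icc_add_one_left_eq_Ioc 0 (2 ^ m)
    have h2 : Finset.Ioc (2 ^ m) (2 ^ (m + 1)) = Finset.Ioc (2 ^ m + 0) (2 ^ m + 2 ^ m) := by
      rw [show (2:ℕ) ^ (m + 1) = 2 ^ m + 2 ^ m from by ring]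
      norm_num
    rw [h1, h2, sum_Ioc_shift σ 0 (2 ^ m) (2 ^ m)]
  rw [hVeq]
  have hVnn : 0 ≤ V := by
    rw [hV]
    apply Finset.sum_nonneg
    intro i _
    exact integral_nonneg fun ω => sq_nonneg _
  nlinarith [hVnn]
end
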